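/- Let J be a set, let x_1, x_2, x_3 ∈ ℓ²(J) with ‖x_i‖ = 1 for i = 1, 2, 3, and let T_1, T_2, T_3 be the Varopoulos triple on H = ℂ ⊕ ℓ²(J) ⊕ ℂ. If the linear span of the six vectors x_1, x_2, x_3, x̄_1, x̄_2, x̄_3 is not dense in ℓ²(J) (equivalently, some nonzero vector of ℓ²(J) is orthogonal to all six), then (T_1, T_2, T_3) is not extremal. -/

import Mathlib

open ContinuousLinearMap in
/-- The block operator `X (h, m) = (T h + A m, B m)` on the Hilbert direct sum `H ⊕₂ M`. -/
noncomputable def blockOp {H M : Type*} [NormedAddCommGroup H] [InnerProductSpace ℂ H]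
    [NormedAddCommGroup M] [InnerProductSpace ℂ M]
    (T : H →L[ℂ] H) (A : M →L[ℂ] H) (B : M →L[ℂ] M) :
    WithLp 2 (H × M) →L[ℂ] WithLp 2 (H × M) :=
  ((WithLp.prodContinuousLinearEquiv 2 ℂ H M).symm : H × M →L[ℂ] WithLp 2 (H × M)) ∘L
    ((T ∘L fst ℂ H M + A ∘L snd ℂ H M).prod (B ∘L snd ℂ H M)) ∘L
    ((WithLp.prodContinuousLinearEquiv 2 ℂ H M) : WithLp 2 (H × M) →L[ℂ] H × M)

/-- A tuple of commuting contractions is extremal if every block extension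
`X_i (h, m) = (T_i h + A_i m, B_i m)` by commuting contractions has `A_i = 0` for all `i`. -/
def IsExtremal {n : ℕ} {H : Type*} [NormedAddCommGroup H] [InnerProductSpace ℂ H]
    [CompleteSpace H] (T : Fin n → H →L[ℂ] H) : Prop :=
  ∀ (M : Type*) [NormedAddCommGroup M] [InnerProductSpace ℂ M] [CompleteSpace M],
    ∀ (A : Fin n → M →L[ℂ] H) (B : Fin n → M →L[ℂ] M),
      (∀ i, ‖blockOp (T i) (A i) (B i)‖ ≤ 1) →
      (∀ i j, blockOp (T i) (A i) (B i) ∘L blockOp (T j) (A j) (B j)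
            = blockOp (T j) (A j) (B j) ∘L blockOp (T i) (A i) (B i)) →
      ∀ i, A i = 0

noncomputable section

/-- The Hilbert space `ℂ ⊕₂ L ⊕₂ ℂ` on which the Varopoulos triple acts. -/
abbrev VarSpace (L : Type*) [NormedAddCommGroup L] [InnerProductSpace ℂ L] : Type _ :=
  WithLp 2 (ℂ × WithLp 2 (L × ℂ))

variable {L : Type*} [NormedAddCommGroup L] [InnerProductSpace ℂ L]

/-- The identification of `VarSpace L` with `ℂ × L × ℂ` as a continuous linear equivalence. -/
def varEquiv (L : Type*) [NormedAddCommGroup L] [InnerProductSpace ℂ L] :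
    VarSpace L ≃L[ℂ] ℂ × L × ℂ :=
  (WithLp.prodContinuousLinearEquiv 2 ℂ ℂ (WithLp 2 (L × ℂ))).trans
    ((ContinuousLinearEquiv.refl ℂ ℂ).prodCongr (WithLp.prodContinuousLinearEquiv 2 ℂ L ℂ))

/-- The element `(c, v, d)` of `VarSpace L`. -/
def varMk (c : ℂ) (v : L) (d : ℂ) : VarSpace L := (varEquiv L).symm (c, v, d)

open ContinuousLinearMap in
/-- The Varopoulos operator `T (c, v, d) = (0, c • x, ⟪xbar, v⟫)` on `ℂ ⊕₂ L ⊕₂ ℂ`.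
With `xbar` the entrywise conjugate of `x`, the third coordinate is the bilinear
pairing `Σ_α x(α) v(α)`. -/
def varOp (x xbar : L) : VarSpace L →L[ℂ] VarSpace L :=
  ((varEquiv L).symm : ℂ × L × ℂ →L[ℂ] VarSpace L) ∘L
    ((0 : ℂ × L × ℂ →L[ℂ] ℂ).prod
      (((fst ℂ ℂ (L × ℂ)).smulRight x).prod
        ((innerSL ℂ xbar) ∘L (fst ℂ L ℂ) ∘L (snd ℂ ℂ (L × ℂ))))) ∘L
    ((varEquiv L) : VarSpace L →L[ℂ] ℂ × L × ℂ)

end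

section Helpers

variable {L : Type*} [NormedAddCommGroup L] [InnerProductSpace ℂ L]

lemma varMk_surj (u : VarSpace L) :
    u = varMk (varEquiv L u).1 (varEquiv L u).2.1 (varEquiv L u).2.2 := by
  simp [varMk]

lemma varOp_varMk (x xbar : L) (c : ℂ) (v : L) (d : ℂ) :
    varOp x xbar (varMk c v d) = varMk 0 (c • x) (inner ℂ xbar v) := rfl

lemma varMk_add (c c' : ℂ) (v v' : L) (d d' : ℂ) :
    varMk c v d + varMk c' v' d' = varMk (c + c') (v + v') (d + d') := by
  rw [varMk, varMk, varMk, ← map_add]; rfl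

lemma varMk_smul (m c : ℂ) (v : L) (d : ℂ) :
    m • varMk c v d = varMk (m * c) (m • v) (m * d) := by
  rw [varMk, varMk, ← map_smul]; rfl

lemma varMk_zero : (varMk 0 0 0 : VarSpace L) = 0 := by
  rw [varMk]; exact map_zero _

lemma varMk_norm_sq (c : ℂ) (v : L) (d : ℂ) :
    ‖(varMk c v d : VarSpace L)‖ ^ 2 = ‖c‖ ^ 2 + ‖v‖ ^ 2 + ‖d‖ ^ 2 := by
  have h : (varMk c v d : VarSpace L) = (WithLp.toLp 2 (c, WithLp.toLp 2 (v, d)) : VarSpace L) := rfl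
  rw [h, WithLp.prod_norm_sq_eq_of_L2]
  have h2 : ‖((WithLp.toLp 2 (c, WithLp.toLp 2 (v, d)) : VarSpace L)).snd‖ ^ 2 = ‖v‖ ^ 2 + ‖d‖ ^ 2 := by
    rw [show ((WithLp.toLp 2 (c, WithLp.toLp 2 (v, d)) : VarSpace L)).snd
          = (WithLp.toLp 2 (v, d) : WithLp 2 (L × ℂ)) from rfl,
      WithLp.prod_norm_sq_eq_of_L2]; rfl
  rw [h2, show (WithLp.toLp 2 (c, WithLp.toLp 2 (v, d)) : VarSpace L).fst = c from rfl]; ring_nf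

lemma blockOp_apply {H M : Type*} [NormedAddCommGroup H] [InnerProductSpace ℂ H]
    [NormedAddCommGroup M] [InnerProductSpace ℂ M]
    (T : H →L[ℂ] H) (A : M →L[ℂ] H) (B : M →L[ℂ] M) (u : WithLp 2 (H × M)) :
    blockOp T A B u = (WithLp.equiv 2 (H × M)).symm (T u.fst + A u.snd, B u.snd) := rfl

lemma withLp_prod_ext {H M : Type*} [NormedAddCommGroup H] [NormedAddCommGroup M]
    {a b : WithLp 2 (H × M)} (h1 : a.fst = b.fst) (h2 : a.snd = b.snd) : a = b :=
  congrArg (WithLp.toLp 2) (Prod.ext h1 h2)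

/-- The rank-one extension operator `m ↦ (0, f m • w, 0)`. -/
noncomputable def extOp {M : Type*} [NormedAddCommGroup M] [InnerProductSpace ℂ M]
    (f : M →L[ℂ] ℂ) (w : L) : M →L[ℂ] VarSpace L :=
  f.smulRight (varMk 0 w 0)

variable {M : Type*} [NormedAddCommGroup M] [InnerProductSpace ℂ M]

lemma extOp_apply (f : M →L[ℂ] ℂ) (w : L) (m : M) : extOp f w m = varMk 0 (f m • w) 0 := by
  rw [extOp, ContinuousLinearMap.smulRight_apply, varMk_smul, mul_zero]

lemma varOp_extOp (x xbar : L) (f : M →L[ℂ] ℂ) (w : L) (h : (inner ℂ xbar w : ℂ) = 0) (m : M) :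
    varOp x xbar (extOp f w m) = 0 := by
  rw [extOp_apply, varOp_varMk, zero_smul, inner_smul_right, h, mul_zero, varMk_zero]

/-- Commutation of the block extensions. -/
lemma block_comm (x1 xb1 x2 xb2 : L) (f : M →L[ℂ] ℂ) (w : L)
    (h1 : (inner ℂ xb1 w : ℂ) = 0) (h2 : (inner ℂ xb2 w : ℂ) = 0)
    (hsym : (inner ℂ xb1 x2 : ℂ) = inner ℂ xb2 x1) :
    blockOp (varOp x1 xb1) (extOp f w) 0 ∘L blockOp (varOp x2 xb2) (extOp f w) 0
      = blockOp (varOp x2 xb2) (extOp f w) 0 ∘L blockOp (varOp x1 xb1) (extOp f w) 0 := by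
  apply ContinuousLinearMap.ext
  intro u
  rw [ContinuousLinearMap.comp_apply, ContinuousLinearMap.comp_apply]
  apply withLp_prod_ext
  · show varOp x1 xb1 (varOp x2 xb2 u.fst + extOp f w u.snd)
          + extOp f w ((0 : M →L[ℂ] M) u.snd)
       = varOp x2 xb2 (varOp x1 xb1 u.fst + extOp f w u.snd)
          + extOp f w ((0 : M →L[ℂ] M) u.snd)
    rw [map_add, map_add, varOp_extOp _ _ _ _ h1, varOp_extOp _ _ _ _ h2]
    congr 1
    rw [varMk_surj u.fst, varOp_varMk, varOp_varMk, varOp_varMk, varOp_varMk,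
      zero_smul, zero_smul, inner_smul_right, inner_smul_right, hsym]
  · rfl

/-- Norm bound for the block extension. -/
lemma block_norm (x xb : L) (f : M →L[ℂ] ℂ) (w : L) (hx : ‖x‖ = 1) (hxb : ‖xb‖ = 1)
    (hw : ‖w‖ ≤ 1) (hf : ∀ m, ‖f m‖ ≤ ‖m‖)
    (horth : (inner ℂ x w : ℂ) = 0) :
    ‖blockOp (varOp x xb) (extOp f w) 0‖ ≤ 1 := by
  apply ContinuousLinearMap.opNorm_le_bound _ zero_le_one
  intro u
  rw [one_mul]
  set c := (varEquiv L u.fst).1 with hc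
  set v := (varEquiv L u.fst).2.1 with hv
  set d := (varEquiv L u.fst).2.2 with hd
  set m := f u.snd with hm
  have hXu : blockOp (varOp x xb) (extOp f w) 0 u
      = (WithLp.equiv 2 (VarSpace L × M)).symm
          (varMk 0 (c • x + m • w) (inner ℂ xb v), 0) := by
    rw [blockOp_apply]
    congr 1
    refine Prod.ext ?_ rfl
    show varOp x xb u.fst + extOp f w u.snd = _
    rw [varMk_surj u.fst, varOp_varMk, extOp_apply, ← hc, ← hv, ← hm, varMk_add]
    rw [zero_add, add_zero]
  have hsq : ‖blockOp (varOp x xb) (extOp f w) 0 u‖ ^ 2 ≤ ‖u‖ ^ 2 := by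
    rw [hXu]
    rw [show ((WithLp.equiv 2 (VarSpace L × M)).symm
          ((varMk 0 (c • x + m • w) (inner ℂ xb v) : VarSpace L), (0 : M)))
        = (WithLp.toLp 2 (varMk 0 (c • x + m • w) (inner ℂ xb v), (0:M)) : WithLp 2 (VarSpace L × M)) from rfl]
    rw [WithLp.prod_norm_sq_eq_of_L2, WithLp.prod_norm_sq_eq_of_L2 u]
    have hfst : ‖(WithLp.toLp 2 (varMk 0 (c • x + m • w) (inner ℂ xb v), (0:M)) :
        WithLp 2 (VarSpace L × M)).fst‖ ^ 2
        = ‖(varMk 0 (c • x + m • w) (inner ℂ xb v) : VarSpace L)‖ ^ 2 := rfl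
    have hsnd : ‖(WithLp.toLp 2 (varMk 0 (c • x + m • w) (inner ℂ xb v), (0:M)) :
        WithLp 2 (VarSpace L × M)).snd‖ ^ 2 = 0 := by
      simp [show (WithLp.toLp 2 (varMk 0 (c • x + m • w) (inner ℂ xb v), (0:M)) :
        WithLp 2 (VarSpace L × M)).snd = (0:M) from rfl]
    rw [hfst, hsnd, varMk_norm_sq, add_zero]
    have hpyth : ‖c • x + m • w‖ ^ 2 = ‖c • x‖ ^ 2 + ‖m • w‖ ^ 2 := by
      rw [norm_add_sq (𝕜 := ℂ)]
      rw [inner_smul_left, inner_smul_right, horth]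
      simp
    have hip : ‖(inner ℂ xb v : ℂ)‖ ^ 2 ≤ ‖v‖ ^ 2 := by
      have := norm_inner_le_norm (𝕜 := ℂ) xb v
      rw [hxb, one_mul] at this
      exact pow_le_pow_left₀ (norm_nonneg _) this 2
    have hufst : ‖u.fst‖ ^ 2 = ‖c‖ ^ 2 + ‖v‖ ^ 2 + ‖d‖ ^ 2 := by
      conv_lhs => rw [varMk_surj u.fst]
      rw [varMk_norm_sq]
    rw [hpyth, hufst, norm_smul, norm_smul, hx]
    simp only [norm_zero, mul_one]
    have hmw : (‖m‖ * ‖w‖) ^ 2 ≤ ‖u.snd‖ ^ 2 := by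
      have h1 : ‖m‖ * ‖w‖ ≤ ‖u.snd‖ := by
        calc ‖m‖ * ‖w‖ ≤ ‖m‖ * 1 := mul_le_mul_of_nonneg_left hw (norm_nonneg _)
          _ = ‖m‖ := mul_one _
          _ ≤ ‖u.snd‖ := hf _
      exact pow_le_pow_left₀ (by positivity) h1 2
    have h0 : (0:ℝ) ≤ ‖d‖ ^ 2 := sq_nonneg _
    nlinarith [hip, hmw, h0]
  calc ‖blockOp (varOp x xb) (extOp f w) 0 u‖
      = √(‖blockOp (varOp x xb) (extOp f w) 0 u‖ ^ 2) := (Real.sqrt_sq (norm_nonneg _)).symm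
    _ ≤ √(‖u‖ ^ 2) := Real.sqrt_le_sqrt hsq
    _ = ‖u‖ := Real.sqrt_sq (norm_nonneg _)

noncomputable instance ULift.innerProductSpace {E : Type*} [NormedAddCommGroup E]
    [InnerProductSpace ℂ E] : InnerProductSpace ℂ (ULift E) where
  inner a b := inner ℂ a.down b.down
  norm_sq_eq_re_inner x := norm_sq_eq_re_inner (𝕜 := ℂ) x.down
  conj_inner_symm x y := inner_conj_symm x.down y.down
  add_left x y z := inner_add_left _ _ _
  smul_left x y r := inner_smul_left _ _ _

end Helpers

/-- If the span of `x_1, x_2, x_3, x̄_1, x̄_2, x̄_3` is not dense in `ℓ²(J)`, then the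
Varopoulos triple is not extremal. -/
theorem statement11 {J : Type*} (x : Fin 3 → lp (fun _ : J => ℂ) 2)
    (hx : ∀ i, ‖x i‖ = 1)
    (hspan : (Submodule.span ℂ
        ({x 0, x 1, x 2, star (x 0), star (x 1), star (x 2)} :
          Set (lp (fun _ : J => ℂ) 2))).topologicalClosure ≠ ⊤) :
    ¬ IsExtremal (fun i : Fin 3 => varOp (x i) (star (x i))) := by
  classical
  intro hext
  rw [Ne, Submodule.topologicalClosure_eq_top_iff] at hspan
  obtain ⟨y, hyK, hy0⟩ := Submodule.ne_bot_iff _ |>.mp hspan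
  set w : lp (fun _ : J => ℂ) 2 := ‖y‖⁻¹ • y with hwdef
  have hwnorm : ‖w‖ = 1 := norm_smul_inv_norm hy0
  have hw0 : w ≠ 0 := by
    intro h; rw [h, norm_zero] at hwnorm; norm_num at hwnorm
  have horth : ∀ z ∈ ({x 0, x 1, x 2, star (x 0), star (x 1), star (x 2)} :
      Set (lp (fun _ : J => ℂ) 2)), (inner ℂ z w : ℂ) = 0 := by
    intro z hz
    have hz' := (Submodule.mem_orthogonal _ y).mp hyK z (Submodule.subset_span hz)
    have hc : (inner ℂ z w : ℂ) = (‖y‖⁻¹ : ℂ) * inner ℂ z y := by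
      rw [hwdef, RCLike.real_smul_eq_coe_smul (K := ℂ), inner_smul_right]
      norm_cast
    rw [hc, hz', mul_zero]
  have hmem : ∀ i : Fin 3, (inner ℂ (x i) w : ℂ) = 0 ∧ (inner ℂ (star (x i)) w : ℂ) = 0 := by
    intro i
    fin_cases i <;>
      exact ⟨horth _ (by simp [Set.mem_insert_iff]), horth _ (by simp [Set.mem_insert_iff])⟩
  have hsym : ∀ i j : Fin 3, (inner ℂ (star (x i)) (x j) : ℂ) = inner ℂ (star (x j)) (x i) := by
    intro i j
    rw [lp.inner_eq_tsum, lp.inner_eq_tsum]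
    congr 1
    funext k
    simp only [RCLike.inner_apply, starRingEnd_apply, lp.star_apply, star_star]
    exact mul_comm _ _
  let f : ULift ℂ →L[ℂ] ℂ :=
    (ContinuousLinearEquiv.ulift (R₁ := ℂ) (M₁ := ℂ)).toContinuousLinearMap
  have hfb : ∀ m : ULift ℂ, ‖f m‖ ≤ ‖m‖ := fun m => le_of_eq rfl
  have hA := hext (ULift ℂ) (fun _ => extOp f w) (fun _ => 0)
    (fun i => block_norm _ _ f _ (hx i) (by rw [norm_star]; exact hx i) hwnorm.le hfb
      (hmem i).1)
    (fun i j => block_comm _ _ _ _ f _ (hmem i).2 (hmem j).2 (hsym i j)) 0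
  have h1 : extOp f w (ULift.up 1) = 0 := by rw [hA]; rfl
  rw [extOp_apply] at h1
  have hf1 : f (ULift.up 1) = 1 := rfl
  rw [hf1, one_smul] at h1
  apply hw0
  have h2 : ((0:ℂ), w, (0:ℂ)) = ((0:ℂ), (0 : lp (fun _ : J => ℂ) 2), (0:ℂ)) :=
    (varEquiv (lp (fun _ : J => ℂ) 2)).symm.injective (h1.trans varMk_zero.symm)
  exact congrArg (fun p => p.2.1) h2
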